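/- Let A be an integral domain with fraction field K, and let F ∈ A[Y] be nonconstant. Suppose that for every nonzero g ∈ A there exist u ∈ A, b ∈ A_{ug} and a prime ideal p of A with ug ∉ p such that F(b) ∈ p·A_p. Then for every nonzero g ∈ A there exists a prime ideal p of A with g ∉ p such that the image of F in κ(p)[Y] has a root in the residue field κ(p). -/
import Mathlib

theorem stmt_17 {A : Type*} [CommRing A] [IsDomain A]
    (F : Polynomial A) (hF : 0 < F.natDegree)
    (h : ∀ g : A, g ≠ 0 → ∃ u : A, ∃ p : Ideal A, p.IsPrime ∧ u * g ∉ p ∧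
      ∃ b : FractionRing A,
        (∃ (a : A) (n : ℕ), b = algebraMap A (FractionRing A) a /
            (algebraMap A (FractionRing A) (u * g)) ^ n) ∧
        ∃ a' ∈ p, ∃ s : A, s ∉ p ∧
          (F.map (algebraMap A (FractionRing A))).eval b =
            algebraMap A (FractionRing A) a' / algebraMap A (FractionRing A) s) :
    ∀ g : A, g ≠ 0 → ∃ p : Ideal A, p.IsPrime ∧ g ∉ p ∧
      ∃ α : FractionRing (A ⧸ p),
        ((F.map (Ideal.Quotient.mk p)).map
          (algebraMap (A ⧸ p) (FractionRing (A ⧸ p)))).eval α = 0 := by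
  intro g hg
  obtain ⟨u, p, hp, hug, b, ⟨a, n, hb⟩, a', ha', s, hs, heval⟩ := h g hg
  haveI := hp
  let f : A →+* FractionRing A := algebraMap A (FractionRing A)
  have hfinj : Function.Injective f := IsFractionRing.injective A (FractionRing A)
  have hug0 : u * g ≠ 0 := fun h0 => hug (h0 ▸ p.zero_mem)
  let t : A := (u * g) ^ n
  have ht0 : t ≠ 0 := pow_ne_zero n hug0
  have hft : f t ≠ 0 := fun h0 => ht0 (hfinj (by simpa using h0))
  have hs0 : s ≠ 0 := fun h0 => hs (h0 ▸ p.zero_mem)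
  have hfs : f s ≠ 0 := fun h0 => hs0 (hfinj (by simpa using h0))
  have hb' : b = f a / f t := by rw [hb]; simp only [map_pow, f, t]
  let c : A := (F.scaleRoots t).eval a
  have hkey : f c = f t ^ F.natDegree * (f a' / f s) := by
    have h1 := Polynomial.scaleRoots_eval₂_mul (p := F) f (f a / f t) t
    rw [mul_div_cancel₀ _ hft] at h1
    show f ((F.scaleRoots t).eval a) = _
    rw [← Polynomial.eval₂_hom, h1]
    congr 1
    rw [← Polynomial.eval_map, ← hb', heval]
  have hsc : s * c = t ^ F.natDegree * a' := by
    apply hfinj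
    rw [map_mul, map_mul, hkey, mul_left_comm, mul_div_cancel₀ _ hfs]
    simp [t, map_pow]
  have hcp : c ∈ p := by
    have hm : s * c ∈ p := by
      rw [hsc]; exact Ideal.mul_mem_left _ _ ha'
    rcases hp.mem_or_mem hm with h1 | h1
    · exact absurd h1 hs
    · exact h1
  refine ⟨p, hp, fun hgp => hug (Ideal.mul_mem_left _ _ hgp), ?_⟩
  let q : A →+* FractionRing (A ⧸ p) :=
    (algebraMap (A ⧸ p) (FractionRing (A ⧸ p))).comp (Ideal.Quotient.mk p)
  have hqinj : Function.Injective (algebraMap (A ⧸ p) (FractionRing (A ⧸ p))) :=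
    IsFractionRing.injective _ _
  have hqt : q t ≠ 0 := by
    intro h0
    apply hug
    have h1 : Ideal.Quotient.mk p t = 0 := by
      apply hqinj; simpa [q] using h0
    exact hp.mem_of_pow_mem n (Ideal.Quotient.eq_zero_iff_mem.mp h1)
  refine ⟨q a / q t, ?_⟩
  have hroot : Polynomial.eval₂ q (q a / q t) F = 0 := by
    have h1 := Polynomial.scaleRoots_eval₂_mul (p := F) q (q a / q t) t
    rw [mul_div_cancel₀ _ hqt, Polynomial.eval₂_hom] at h1
    have hc0 : q c = 0 := by
      simp [q, Ideal.Quotient.eq_zero_iff_mem.mpr hcp]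
    rw [show (F.scaleRoots t).eval a = c from rfl, hc0] at h1
    rcases mul_eq_zero.mp h1.symm with h2 | h2
    · exact absurd h2 (pow_ne_zero _ hqt)
    · exact h2
  rw [Polynomial.eval_map, Polynomial.eval₂_map]
  exact hroot
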